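/- Let R be a commutative ring of prime characteristic p and 𝔞 an ideal of R generated by m elements. Then for every power q of p and every integer k ≥ −1, one has 𝔞^{(m+k)q} = 𝔞^{(m−1)q} · (𝔞^[q])^{k+1}, where 𝔞^[q] is the ideal generated by q-th powers of elements of 𝔞. -/

import Mathlib

open scoped BigOperators

/-- The `q`-th bracket power of an ideal: the ideal generated by `q`-th powers
of elements of `a`. -/
def bracketPow {R : Type*} [CommRing R] (a : Ideal R) (q : ℕ) : Ideal R :=
  Ideal.span ((fun x => x ^ q) '' (a : Set R))

/-- The generalized `k`-th Frobenius power of an ideal, defined via the base-`p`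
digits of `k`:  `𝔞^[k] = ∏ᵢ (𝔞^[pⁱ])^(kᵢ)` where `kᵢ = k / pⁱ % p` is the `i`-th
base-`p` digit of `k` (digits with index `> k` vanish, so the product below suffices). -/
def frobPow {R : Type*} [CommRing R] (p : ℕ) (a : Ideal R) (k : ℕ) : Ideal R :=
  ∏ i ∈ Finset.range (k + 1), bracketPow a (p ^ i) ^ (k / p ^ i % p)

lemma pow_mem_bracketPow {R : Type*} [CommRing R] {a : Ideal R} {q : ℕ} {x : R}
    (hx : x ∈ a) : x ^ q ∈ bracketPow a q :=
  Ideal.subset_span ⟨x, hx, rfl⟩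

lemma bracketPow_mono {R : Type*} [CommRing R] {a b : Ideal R} (h : a ≤ b) (q : ℕ) :
    bracketPow a q ≤ bracketPow b q :=
  Ideal.span_mono (Set.image_mono h)

lemma bracketPow_le_pow {R : Type*} [CommRing R] (a : Ideal R) (q : ℕ) :
    bracketPow a q ≤ a ^ q := by
  rw [bracketPow, Ideal.span_le]
  rintro _ ⟨x, hx, rfl⟩
  exact Ideal.pow_mem_pow hx q

lemma ideal_sum_le {R : Type*} [CommRing R] {ι : Type*} {s : Finset ι} {f : ι → Ideal R}
    {I : Ideal R} (h : ∀ i ∈ s, f i ≤ I) : ∑ i ∈ s, f i ≤ I := by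
  classical
  induction s using Finset.induction_on with
  | empty => simpa using bot_le
  | insert _ _ hx ih =>
    rw [Finset.sum_insert hx]
    exact sup_le (h _ (Finset.mem_insert_self _ _))
      (ih fun i hi => h i (Finset.mem_insert_of_mem hi))

lemma key {R : Type*} [CommRing R] (q : ℕ) (hq : 1 ≤ q) :
    ∀ (m : ℕ) (a : Ideal R) (g : Fin (m + 1) → R), a = Ideal.span (Set.range g) →
      a ^ ((m + 1) * q) ≤ a ^ (m * q) * bracketPow a q := by
  intro m
  induction m with
  | zero =>
    intro a g ha
    have h0 : g 0 ∈ a := ha ▸ Ideal.subset_span ⟨0, rfl⟩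
    have hr : Set.range g = {g 0} := by
      ext y
      simp only [Set.mem_range, Set.mem_singleton_iff]
      constructor
      · rintro ⟨i, rfl⟩; rw [show i = 0 from Fin.ext (by omega)]
      · rintro rfl; exact ⟨0, rfl⟩
    have : a = Ideal.span {g 0} := by rw [ha, hr]
    have e1 : (0 + 1) * q = q := by ring
    have e0 : 0 * q = 0 := by ring
    rw [this, e1, e0, pow_zero, one_mul, Ideal.span_singleton_pow,
      Ideal.span_le, Set.singleton_subset_iff]
    exact pow_mem_bracketPow (this ▸ h0)
  | succ m ih =>
    intro a g ha
    set x := g (Fin.last (m + 1)) with hx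
    set b := Ideal.span (Set.range (g ∘ Fin.castSucc)) with hb
    set c := Ideal.span {x} with hc
    have hba : b ≤ a := by
      rw [ha]; exact Ideal.span_mono (Set.range_comp_subset_range _ _)
    have hxa : x ∈ a := ha ▸ Ideal.subset_span ⟨_, rfl⟩
    have hca : c ≤ a := by rw [hc, Ideal.span_le, Set.singleton_subset_iff]; exact hxa
    have habc : a = b + c := by
      rw [ha, hb, hc, Submodule.add_eq_sup, ← Ideal.span_union]
      congr 1
      ext y
      constructor
      · rintro ⟨i, rfl⟩
        rcases Fin.eq_castSucc_or_eq_last i with ⟨j, rfl⟩ | rfl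
        · exact Or.inl ⟨j, rfl⟩
        · exact Or.inr rfl
      · rintro (⟨j, rfl⟩ | rfl)
        · exact ⟨_, rfl⟩
        · exact ⟨_, rfl⟩
    set n := (m + 2) * q with hn
    set B := bracketPow a q with hB
    set T := a ^ ((m + 1) * q) * B with hT
    have hcqB : c ^ q ≤ B := by
      rw [hc, Ideal.span_singleton_pow, Ideal.span_le, Set.singleton_subset_iff]
      exact pow_mem_bracketPow hxa
    calc a ^ ((m + 1 + 1) * q) = (b + c) ^ n := by rw [← habc]
      _ ≤ T := by
        rw [add_pow]
        apply ideal_sum_le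
        intro k hk
        rw [Finset.mem_range, Nat.lt_succ_iff] at hk
        have hMn : n = (m + 1) * q + q := by rw [hn]; ring
        have h2 : (m + 1) * q = m * q + q := by ring
        have step1 : b ^ k * c ^ (n - k) * (↑(n.choose k) : Ideal R) ≤ b ^ k * c ^ (n - k) :=
          Ideal.mul_le_left
        refine step1.trans ?_
        by_cases hkle : k ≤ (m + 1) * q
        · -- n - k ≥ q
          obtain ⟨d, hd⟩ : ∃ d, n - k = d + q := ⟨n - k - q, by omega⟩
          have : b ^ k * c ^ (n - k) ≤ a ^ k * (a ^ d * c ^ q) := by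
            rw [hd, pow_add]
            exact Ideal.mul_mono (Ideal.pow_right_mono hba k)
              (Ideal.mul_mono (Ideal.pow_right_mono hca _) le_rfl)
          refine this.trans ?_
          refine (Ideal.mul_mono le_rfl (Ideal.mul_mono le_rfl hcqB)).trans ?_
          rw [← mul_assoc, ← pow_add]
          have he : k + d = (m + 1) * q := by omega
          rw [he, hT]
        · -- k > (m+1) * q
          push_neg at hkle
          have hbk : b ^ k = b ^ ((m + 1) * q) * b ^ (k - (m + 1) * q) := by
            rw [← pow_add]; congr 1; omega
          have hib : b ^ ((m + 1) * q) ≤ b ^ (m * q) * bracketPow b q :=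
            ih b (g ∘ Fin.castSucc) rfl
          have : b ^ k * c ^ (n - k) ≤
              (a ^ (m * q) * B) * (a ^ (k - (m + 1) * q) * a ^ (n - k)) := by
            rw [hbk]
            refine (Ideal.mul_mono (Ideal.mul_mono
              (hib.trans (Ideal.mul_mono (Ideal.pow_right_mono hba _) (bracketPow_mono hba q)))
              (Ideal.pow_right_mono hba _)) (Ideal.pow_right_mono hca _)).trans ?_
            ring_nf
            exact le_rfl
          refine this.trans ?_
          have he : m * q + (k - (m + 1) * q + (n - k)) = (m + 1) * q := by omega
          refine le_of_eq ?_
          calc a ^ (m * q) * B * (a ^ (k - (m + 1) * q) * a ^ (n - k))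
              = a ^ (m * q + (k - (m + 1) * q + (n - k))) * B := by
                rw [pow_add, pow_add]; ring
            _ = a ^ ((m + 1) * q) * B := by rw [he]
            _ = T := hT.symm

/-- For an ideal generated by `m` elements, the pigeonhole identity
`𝔞^{(m+k)q} = 𝔞^{(m−1)q} · (𝔞^[q])^{k+1}` holds for every integer `k ≥ −1`; writing
`j = k + 1 ∈ ℕ`, this reads `𝔞^{(m−1+j)q} = 𝔞^{(m−1)q} · (𝔞^[q])^j`. -/
theorem stmt_10 {R : Type*} [CommRing R] (p : ℕ) (hp : p.Prime) [CharP R p]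
    (m : ℕ) (a : Ideal R) (g : Fin m → R) (hg : a = Ideal.span (Set.range g))
    (e j : ℕ) :
    a ^ ((m - 1 + j) * p ^ e) = a ^ ((m - 1) * p ^ e) * bracketPow a (p ^ e) ^ j := by
  have hq : 1 ≤ p ^ e := Nat.one_le_pow _ _ hp.pos
  set q := p ^ e with hqdef
  cases m with
  | zero =>
    have ha : a = ⊥ := by
      rw [hg, Set.range_eq_empty, Ideal.span_empty]
    subst ha
    have hbb : bracketPow (⊥ : Ideal R) q = ⊥ := by
      rw [eq_bot_iff, bracketPow, Ideal.span_le]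
      rintro _ ⟨x, hx, rfl⟩
      have hx0 : x = 0 := by simpa using hx
      simp [hx0, zero_pow (by omega : q ≠ 0)]
    rw [hbb]
    simp only [Nat.zero_sub, Nat.zero_add, Nat.zero_mul, pow_zero, one_mul]
    cases j with
    | zero => simp
    | succ j' =>
      have hb0 : (⊥ : Ideal R) = 0 := rfl
      rw [hb0, zero_pow (by positivity : j' + 1 ≠ 0),
        zero_pow (by positivity : (j' + 1) * q ≠ 0)]
  | succ m' =>
    simp only [Nat.add_sub_cancel]
    have key1 : a ^ ((m' + 1) * q) = a ^ (m' * q) * bracketPow a q := by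
      refine le_antisymm (key q hq m' a g hg) ?_
      calc a ^ (m' * q) * bracketPow a q ≤ a ^ (m' * q) * a ^ q :=
            Ideal.mul_mono le_rfl (bracketPow_le_pow a q)
        _ = a ^ ((m' + 1) * q) := by rw [← pow_add, Nat.add_one_mul]
    induction j with
    | zero => simp
    | succ j ihj =>
      have hexp : (m' + (j + 1)) * q = (m' + j) * q + q := by ring
      rw [hexp, pow_add, ihj, pow_succ]
      calc a ^ (m' * q) * bracketPow a q ^ j * a ^ q
          = (a ^ (m' * q) * a ^ q) * bracketPow a q ^ j := by ring
        _ = (a ^ ((m' + 1) * q)) * bracketPow a q ^ j := by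
            rw [← pow_add, Nat.add_one_mul]
        _ = a ^ (m' * q) * bracketPow a q * bracketPow a q ^ j := by rw [key1]
        _ = a ^ (m' * q) * (bracketPow a q ^ j * bracketPow a q) := by ring
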